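/- (User privacy of the achievable scheme) Let q be a prime power, G a simple graph with vertex set [N] and edge set indexed by [K], and Ī a signed incidence matrix of G. Let W (the messages) and R (the randomness) be random variables, and let h = (h_1,…,h_K) be uniform on 𝔽_q^K and independent of (W, R). Fix a server n of degree δ and list the edges incident to n as ℓ_1 < … < ℓ_δ. For a desired edge index k ∈ [K], define the query Q_n^{[k]} ∈ 𝔽_q^δ by Q_n^{[k]} = (Ī(n,ℓ_1)·h_{ℓ_1}, …, Ī(n,ℓ_δ)·h_{ℓ_δ}) + [k is incident to n and n is the designated endpoint j of edge k]·e_m, where e_m is the standard unit vector selecting the position of edge k among ℓ_1,…,ℓ_δ. Then for every k, the query Q_n^{[k]} is uniformly distributed on 𝔽_q^δ and independent of (W, R); in particular the joint distribution of (Q_n^{[k]}, 𝒲_n, ℛ_n) is the same for every desired index k, where 𝒲_n and ℛ_n are the messages and randomness stored at server n. -/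
import Mathlib


open Finset

noncomputable section

namespace SPIR

variable {Ω : Type} [Fintype Ω]

/-- Probability of an event under the probability mass function `μ`
on the finite sample space `Ω`. -/
def pr (μ : Ω → ℝ) (E : Set Ω) : ℝ := ∑ ω, E.indicator μ ω

/-- Shannon entropy of the random variable `X`, measured in `q`-ary units. -/
def ent (q : ℕ) (μ : Ω → ℝ) {α : Type*} (X : Ω → α) : ℝ :=
  -∑ ω, μ ω * Real.logb q (pr μ {ω' | X ω' = X ω})

/-- Conditional Shannon entropy `H(X | Y)` in `q`-ary units. -/
def condEnt (q : ℕ) (μ : Ω → ℝ) {α β : Type*} (X : Ω → α) (Y : Ω → β) : ℝ :=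
  ent q μ (fun ω => (X ω, Y ω)) - ent q μ Y

/-- Mutual information `I(X ; Y)` in `q`-ary units. -/
def mutInf (q : ℕ) (μ : Ω → ℝ) {α β : Type*} (X : Ω → α) (Y : Ω → β) : ℝ :=
  ent q μ X + ent q μ Y - ent q μ (fun ω => (X ω, Y ω))

/-- Two random variables have the same (joint) distribution. -/
def IdentDist (μ : Ω → ℝ) {α : Type*} (X Y : Ω → α) : Prop :=
  ∀ s : Set α, pr μ (X ⁻¹' s) = pr μ (Y ⁻¹' s)

/-- Independence of two random variables. -/
def IndepRV (μ : Ω → ℝ) {α β : Type*} (X : Ω → α) (Y : Ω → β) : Prop :=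
  ∀ (s : Set α) (t : Set β),
    pr μ (X ⁻¹' s ∩ Y ⁻¹' t) = pr μ (X ⁻¹' s) * pr μ (Y ⁻¹' t)

lemma pr_empty (μ : Ω → ℝ) : pr μ (∅ : Set Ω) = 0 := by simp [pr]

lemma pr_fiber_sum {A : Type*} [Fintype A] (μ : Ω → ℝ) (X : Ω → A) (E : Set Ω) :
    pr μ E = ∑ a : A, pr μ {ω | X ω = a ∧ ω ∈ E} := by
  classical
  simp only [pr]
  rw [Finset.sum_comm]
  refine Finset.sum_congr rfl fun ω _ => ?_
  rw [Finset.sum_eq_single (X ω)]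
  · by_cases hω : ω ∈ E <;> simp [Set.indicator, hω]
  · intro a _ ha
    apply Set.indicator_of_notMem
    rintro ⟨h1, -⟩
    exact ha h1.symm
  · simp

lemma count_fix {q K δ : ℕ} {F : Type} [Fintype F] [DecidableEq F]
    (hqF : Fintype.card F = q) (ℓe : Fin δ → Fin K) (hinj : Function.Injective ℓe)
    (g : Fin δ → F) :
    (Finset.univ.filter fun u : Fin K → F => ∀ i, u (ℓe i) = g i).card = q ^ (K - δ) := by
  classical
  set G : Fin K → Finset F :=
    fun m => Finset.univ.filter fun x => ∀ i, ℓe i = m → x = g i with hG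
  have hset : (Finset.univ.filter fun u : Fin K → F => ∀ i, u (ℓe i) = g i)
      = Fintype.piFinset G := by
    ext u
    simp only [Finset.mem_filter, Finset.mem_univ, true_and, Fintype.mem_piFinset, hG]
    constructor
    · intro hu m
      rintro i rfl
      exact hu i
    · intro hu i
      exact hu (ℓe i) i rfl
  rw [hset, Fintype.card_piFinset]
  set img := Finset.univ.image ℓe with himg
  have hGcard : ∀ m, (G m).card = if m ∈ img then 1 else q := by
    intro m
    split_ifs with hm
    · obtain ⟨i0, -, hi0⟩ := Finset.mem_image.1 hm
      have : G m = {g i0} := by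
        ext x
        simp only [hG, Finset.mem_filter, Finset.mem_univ, true_and, Finset.mem_singleton]
        constructor
        · intro hx; exact hx i0 hi0
        · intro hx i hi
          have : i = i0 := hinj (hi.trans hi0.symm)
          subst this; exact hx
      rw [this]; simp
    · have : G m = Finset.univ := by
        ext x
        simp only [hG, Finset.mem_filter, Finset.mem_univ, true_and, iff_true]
        intro i hi
        exact absurd (Finset.mem_image.2 ⟨i, Finset.mem_univ i, hi⟩) hm
      rw [this]
      simpa using hqF
  calc (∏ m, (G m).card) = ∏ m, (if m ∈ img then 1 else q) :=
        Finset.prod_congr rfl fun m _ => hGcard m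
    _ = (∏ _m ∈ Finset.univ.filter (· ∈ img), 1)
          * ∏ _m ∈ Finset.univ.filter (· ∉ img), q := Finset.prod_ite _ _
    _ = q ^ (Finset.univ.filter (· ∉ img)).card := by
        rw [Finset.prod_const_one, one_mul, Finset.prod_const]
    _ = q ^ (K - δ) := by
        congr 1
        have h1 : Finset.univ.filter (· ∈ img) = img := by
          ext m; simp
        have h2 : Finset.univ.filter (· ∉ img) = Finset.univ \ img := by
          ext m; simp
        rw [h2, Finset.card_sdiff_of_subset (Finset.subset_univ _)]
        have : img.card = δ := by
          rw [himg, Finset.card_image_of_injective _ hinj, Finset.card_univ,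
            Fintype.card_fin]
        rw [this, Finset.card_univ, Fintype.card_fin]

lemma key_uniform {q K δ : ℕ} {F : Type} [Field F] [Fintype F]
    (hqF : Fintype.card F = q)
    (a : Fin δ → F) (ha : ∀ i, a i ≠ 0) (ℓe : Fin δ → Fin K)
    (hinj : Function.Injective ℓe) (c : Fin δ → F)
    (μ : Ω → ℝ) {WT RT : Type} (W : Ω → WT) (R : Ω → RT) (h : Ω → Fin K → F)
    (hh : ∀ (v : Fin K → F) (s : Set (WT × RT)),
      pr μ {ω | h ω = v ∧ (W ω, R ω) ∈ s}
        = (1 / (q : ℝ)) ^ K * pr μ {ω | (W ω, R ω) ∈ s})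
    (v : Fin δ → F) (s : Set (WT × RT)) :
    pr μ {ω | (fun i => a i * h ω (ℓe i) + c i) = v ∧ (W ω, R ω) ∈ s}
      = (1 / (q : ℝ)) ^ δ * pr μ {ω | (W ω, R ω) ∈ s} := by
  classical
  have hq1 : 0 < q := hqF ▸ Fintype.card_pos
  have hq0 : (q : ℝ) ≠ 0 := Nat.cast_ne_zero.2 hq1.ne'
  have hδK : δ ≤ K := by
    have := Fintype.card_le_of_injective ℓe hinj
    simpa using this
  set g : Fin δ → F := fun i => (v i - c i) * (a i)⁻¹ with hg
  have hcond : ∀ u : Fin K → F,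
      ((fun i => a i * u (ℓe i) + c i) = v) ↔ (∀ i, u (ℓe i) = g i) := by
    intro u
    rw [funext_iff]
    refine forall_congr' fun i => ?_
    simp only [hg]
    constructor
    · intro he
      rw [← he, add_sub_cancel_right, mul_comm (a i), mul_assoc,
        mul_inv_cancel₀ (ha i), mul_one]
    · intro he
      rw [he, mul_comm (v i - c i), ← mul_assoc, mul_inv_cancel₀ (ha i), one_mul,
        sub_add_cancel]
  rw [pr_fiber_sum μ h {ω | (fun i => a i * h ω (ℓe i) + c i) = v ∧ (W ω, R ω) ∈ s}]
  have hset : ∀ u : Fin K → F,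
      {ω | h ω = u ∧ ω ∈ {ω | (fun i => a i * h ω (ℓe i) + c i) = v ∧ (W ω, R ω) ∈ s}}
        = if (∀ i, u (ℓe i) = g i) then {ω | h ω = u ∧ (W ω, R ω) ∈ s}
          else (∅ : Set Ω) := by
    intro u
    split_ifs with hu
    · ext ω
      simp only [Set.mem_setOf_eq]
      constructor
      · rintro ⟨h1, -, h3⟩; exact ⟨h1, h3⟩
      · rintro ⟨h1, h2⟩
        refine ⟨h1, ?_, h2⟩
        rw [h1, hcond u]
        exact hu
    · ext ω
      simp only [Set.mem_setOf_eq, Set.mem_empty_iff_false, iff_false]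
      rintro ⟨rfl, h2, -⟩
      exact hu ((hcond (h ω)).1 h2)
  calc (∑ u : Fin K → F, pr μ {ω | h ω = u ∧
          ω ∈ {ω | (fun i => a i * h ω (ℓe i) + c i) = v ∧ (W ω, R ω) ∈ s}})
      = ∑ u : Fin K → F, (if (∀ i, u (ℓe i) = g i) then
          (1 / (q : ℝ)) ^ K * pr μ {ω | (W ω, R ω) ∈ s} else 0) := by
        refine Finset.sum_congr rfl fun u _ => ?_
        rw [hset u]
        split_ifs with hu
        · exact hh u s
        · exact pr_empty μ
    _ = ((Finset.univ.filter fun u : Fin K → F => ∀ i, u (ℓe i) = g i).card : ℝ)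
          * ((1 / (q : ℝ)) ^ K * pr μ {ω | (W ω, R ω) ∈ s}) := by
        rw [← Finset.sum_filter, Finset.sum_const, nsmul_eq_mul]
    _ = (1 / (q : ℝ)) ^ δ * pr μ {ω | (W ω, R ω) ∈ s} := by
        rw [count_fix hqF ℓe hinj g]
        have hqK : (q : ℝ) ^ (K - δ) * (q : ℝ) ^ δ = (q : ℝ) ^ K := by
          rw [← pow_add, Nat.sub_add_cancel hδK]
        have hkey : (q : ℝ) ^ (K - δ) * ((q : ℝ) ^ K)⁻¹ = ((q : ℝ) ^ δ)⁻¹ := by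
          rw [← hqK, mul_inv, ← mul_assoc, mul_inv_cancel₀ (pow_ne_zero _ hq0),
            one_mul]
        push_cast
        rw [one_div, inv_pow, inv_pow, ← mul_assoc, hkey]

lemma ident_of_uniform {q δ : ℕ} {F : Type} [Fintype F] {WT RT : Type}
    (μ : Ω → ℝ) (W : Ω → WT) (R : Ω → RT) (Q1 Q2 : Ω → Fin δ → F)
    (h1 : ∀ (v : Fin δ → F) (s : Set (WT × RT)),
      pr μ {ω | Q1 ω = v ∧ (W ω, R ω) ∈ s}
        = (1 / (q : ℝ)) ^ δ * pr μ {ω | (W ω, R ω) ∈ s})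
    (h2 : ∀ (v : Fin δ → F) (s : Set (WT × RT)),
      pr μ {ω | Q2 ω = v ∧ (W ω, R ω) ∈ s}
        = (1 / (q : ℝ)) ^ δ * pr μ {ω | (W ω, R ω) ∈ s}) :
    IdentDist μ (fun ω => (Q1 ω, W ω, R ω)) (fun ω => (Q2 ω, W ω, R ω)) := by
  classical
  intro s
  have key : ∀ Q : Ω → Fin δ → F,
      (∀ (v : Fin δ → F) (t : Set (WT × RT)),
        pr μ {ω | Q ω = v ∧ (W ω, R ω) ∈ t}
          = (1 / (q : ℝ)) ^ δ * pr μ {ω | (W ω, R ω) ∈ t}) →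
      pr μ ((fun ω => (Q ω, W ω, R ω)) ⁻¹' s)
        = ∑ v : Fin δ → F, (1 / (q : ℝ)) ^ δ
            * pr μ {ω | (W ω, R ω) ∈ {wr | (v, wr) ∈ s}} := by
    intro Q hQ
    rw [pr_fiber_sum μ Q ((fun ω => (Q ω, W ω, R ω)) ⁻¹' s)]
    refine Finset.sum_congr rfl fun v _ => ?_
    rw [← hQ v {wr | (v, wr) ∈ s}]
    congr 1
    ext ω
    simp only [Set.mem_setOf_eq, Set.mem_preimage]
    exact and_congr_right fun hv => by rw [hv]
  rw [key Q1 h1, key Q2 h2]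

/-- **User privacy of the achievable scheme.** Let `Ī` be a signed incidence matrix of
a simple graph on vertices `Fin N` with edges `Fin K`, let `h` be uniform on `𝔽_q^K`
and independent of the stored data `(W, R)`, fix a server `n` of degree `δ`, list its
incident edges as `ℓe 0 < … < ℓe (δ-1)`, and let `jdes m` be the designated endpoint of
edge `m`.  Then for every desired index `k` the query
`Q_n^[k] = (Ī n (ℓe i) · h (ℓe i))_i + [k incident to n and jdes k = n] · e_m`
is uniform on `𝔽_q^δ` and independent of `(W, R)`; in particular the joint
distribution of `(Q_n^[k], W, R)` — hence of `(Q_n^[k], 𝒲_n, ℛ_n)` — is the same for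
every `k`. -/
theorem scheme_user_privacy
    {q N K : ℕ} (F : Type) [Field F] [Fintype F] (hqF : Fintype.card F = q)
    (I : Fin N → Fin K → F)
    (hI : ∀ ℓ : Fin K, ∃ a b : Fin N, a ≠ b ∧ I a ℓ = 1 ∧ I b ℓ = -1 ∧
      ∀ m : Fin N, m ≠ a → m ≠ b → I m ℓ = 0)
    (jdes : Fin K → Fin N) (hjdes : ∀ m : Fin K, I (jdes m) m ≠ 0)
    (n : Fin N) (δ : ℕ) (ℓe : Fin δ → Fin K) (hmono : StrictMono ℓe)
    (hinc : ∀ i : Fin δ, I n (ℓe i) ≠ 0)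
    (hallinc : ∀ m : Fin K, I n m ≠ 0 → ∃ i : Fin δ, ℓe i = m)
    {Ω : Type} [Fintype Ω] (μ : Ω → ℝ)
    (hμ0 : ∀ ω, 0 ≤ μ ω) (hμ1 : ∑ ω, μ ω = 1)
    {WT RT : Type} (W : Ω → WT) (R : Ω → RT) (h : Ω → Fin K → F)
    (hh : ∀ (v : Fin K → F) (s : Set (WT × RT)),
      pr μ {ω | h ω = v ∧ (W ω, R ω) ∈ s}
        = (1 / (q : ℝ)) ^ K * pr μ {ω | (W ω, R ω) ∈ s}) :
    ∀ k : Fin K,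
      (∀ (v : Fin δ → F) (s : Set (WT × RT)),
        pr μ {ω | (fun i : Fin δ =>
              I n (ℓe i) * h ω (ℓe i) +
                if ℓe i = k ∧ jdes k = n then 1 else 0) = v ∧ (W ω, R ω) ∈ s}
          = (1 / (q : ℝ)) ^ δ * pr μ {ω | (W ω, R ω) ∈ s}) ∧
      ∀ k' : Fin K, IdentDist μ
        (fun ω => ((fun i : Fin δ =>
            I n (ℓe i) * h ω (ℓe i) +
              if ℓe i = k ∧ jdes k = n then 1 else 0), W ω, R ω))
        (fun ω => ((fun i : Fin δ =>
            I n (ℓe i) * h ω (ℓe i) +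
              if ℓe i = k' ∧ jdes k' = n then 1 else 0), W ω, R ω)) := by
  intro k
  have main : ∀ k0 : Fin K, ∀ (v : Fin δ → F) (s : Set (WT × RT)),
      pr μ {ω | (fun i : Fin δ =>
            I n (ℓe i) * h ω (ℓe i) +
              if ℓe i = k0 ∧ jdes k0 = n then 1 else 0) = v ∧ (W ω, R ω) ∈ s}
        = (1 / (q : ℝ)) ^ δ * pr μ {ω | (W ω, R ω) ∈ s} := by
    intro k0 v s
    exact key_uniform hqF (fun i => I n (ℓe i)) hinc ℓe hmono.injective
      (fun i => if ℓe i = k0 ∧ jdes k0 = n then 1 else 0) μ W R h hh v s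
  refine ⟨main k, fun k' => ?_⟩
  exact ident_of_uniform μ W R _ _ (main k) (main k')

end SPIR
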